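/- Let M = Σ_{i=0}^k ξ_i·D^i be an x-symmetry driver for the equation u_{xy} = F. Then the coefficients satisfy: (D̄ − ∂F/∂u_1)(ξ_k) = 0, and for every 1 ≤ i ≤ k, (D̄ − ∂F/∂u_1)(ξ_{i−1}) = ( (∂F/∂u_0) + (∂F/∂u_1)·D + (∂F/∂ū_1)·D̄ − D∘D̄ )(ξ_i). -/
import Mathlib


open MvPolynomial

noncomputable section

/-- Variables of the ring R = K[x, y, u₀, u₁, …, ū₁, ū₂, …].
`Var.ubar j` denotes the variable ū_{j+1}, so that `Var.ubar 0 = ū₁`. -/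
inductive Var : Type
  | x : Var
  | y : Var
  | u : ℕ → Var
  | ubar : ℕ → Var
  deriving DecidableEq

/-- The ring R. -/
abbrev RR (K : Type*) [CommSemiring K] : Type _ := MvPolynomial Var K

variable {K : Type*} [Field K] [CharZero K]

/-- The subring 𝓕 ⊆ R of polynomials not involving any ū_j. -/
def Fcal (K : Type*) [CommSemiring K] : Subalgebra K (RR K) :=
  MvPolynomial.supported K {v : Var | ∀ j : ℕ, v ≠ Var.ubar j}

/-- The set of variables that F may involve: x, y, u₀, u₁, ū₁. -/
def Fvars : Set Var := {Var.x, Var.y, Var.u 0, Var.u 1, Var.ubar 0}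

/-- `D` and `Dbar` are the total derivatives with respect to x and y on solutions
of u_{xy} = F, i.e. the K-derivations determined by mutual recursion by
D(x) = 1, D(y) = 0, D(uᵢ) = u_{i+1}, D(ū_i) = D̄^{i-1}(F) (i ≥ 1);
D̄(y) = 1, D̄(x) = 0, D̄(u₀) = ū₁, D̄(u_i) = D^{i-1}(F) (i ≥ 1), D̄(ū_i) = ū_{i+1}.
(Recall `Var.ubar j` denotes ū_{j+1}.)  -/
structure IsTotalDerPair (F : RR K) (D Dbar : Derivation K (RR K) (RR K)) : Prop where
  hDx : D (X Var.x) = 1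
  hDy : D (X Var.y) = 0
  hDu : ∀ i : ℕ, D (X (Var.u i)) = X (Var.u (i + 1))
  hDubar : ∀ j : ℕ, D (X (Var.ubar j)) = (⇑Dbar)^[j] F
  hDbary : Dbar (X Var.y) = 1
  hDbarx : Dbar (X Var.x) = 0
  hDbaru0 : Dbar (X (Var.u 0)) = X (Var.ubar 0)
  hDbaru : ∀ i : ℕ, Dbar (X (Var.u (i + 1))) = (⇑D)^[i] F
  hDbarubar : ∀ j : ℕ, Dbar (X (Var.ubar j)) = X (Var.ubar (j + 1))

/-- `g` is a symmetry of the equation u_{xy} = F: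
D(D̄(g)) − F_{u₁}·D(g) − F_{ū₁}·D̄(g) − F_{u₀}·g = 0. -/
def IsSymmetry (F : RR K) (D Dbar : Derivation K (RR K) (RR K)) (g : RR K) : Prop :=
  D (Dbar g) - pderiv (Var.u 1) F * D g - pderiv (Var.ubar 0) F * Dbar g
    - pderiv (Var.u 0) F * g = 0

/-- The differential operator Σ_{i=0}^k ξ_i·Df^i applied to `a`. -/
def opApply {A : Type*} [CommRing A] (Df : A → A) (ξ : ℕ → A) (k : ℕ) (a : A) : A :=
  ∑ i ∈ Finset.range (k + 1), ξ i * Df^[i] a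

/-- `ξ 0, …, ξ k` are the coefficients of an x-symmetry driver of order `k`:
`ξ k ≠ 0` and Σ ξ_i·D^i maps every x-integral to a symmetry. -/
def IsDriver (F : RR K) (D Dbar : Derivation K (RR K) (RR K)) (k : ℕ) (ξ : ℕ → RR K) : Prop :=
  ξ k ≠ 0 ∧ ∀ W : RR K, Dbar W = 0 → IsSymmetry F D Dbar (opApply ⇑D ξ k W)

/-- The Fréchet derivative a_* = Σ_{i≥0} (∂a/∂uᵢ)·D^i applied to `g`. -/
def frechet (D : Derivation K (RR K) (RR K)) (a g : RR K) : RR K :=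
  ∑ᶠ i : ℕ, pderiv (Var.u i) a * (⇑D)^[i] g

/-- The Lie bracket [f, g] = g_*(f) − f_*(g). -/
def lieBracket (D : Derivation K (RR K) (RR K)) (f g : RR K) : RR K :=
  frechet D g f - frechet D f g

set_option linter.unusedSectionVars false

lemma Dbar_xpow {F : RR K} {D Dbar : Derivation K (RR K) (RR K)}
    (hDD : IsTotalDerPair F D Dbar) (n : ℕ) : Dbar (X Var.x ^ n) = 0 := by
  rw [Derivation.leibniz_pow, hDD.hDbarx, smul_zero, smul_zero]

lemma iterD_xpow {F : RR K} {D Dbar : Derivation K (RR K) (RR K)}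
    (hDD : IsTotalDerPair F D Dbar) (i m : ℕ) :
    (⇑D)^[i] (X Var.x ^ m) = (m.descFactorial i : RR K) * X Var.x ^ (m - i) := by
  induction i with
  | zero => simp
  | succ i ih =>
    rw [Function.iterate_succ_apply', ih, Derivation.leibniz, Derivation.map_natCast,
      Derivation.leibniz_pow, hDD.hDx]
    simp only [smul_eq_mul, mul_one, mul_zero, add_zero, Nat.descFactorial_succ, Nat.cast_mul,
      Nat.sub_sub]
    ring

lemma Dbar_iterD_xpow {F : RR K} {D Dbar : Derivation K (RR K) (RR K)}
    (hDD : IsTotalDerPair F D Dbar) (i m : ℕ) :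
    Dbar ((⇑D)^[i] (X Var.x ^ m)) = 0 := by
  rw [iterD_xpow hDD, Derivation.leibniz, Derivation.map_natCast, Dbar_xpow hDD]
  simp

/-- A_i coefficient. -/
def Acoef (F : RR K) (D Dbar : Derivation K (RR K) (RR K)) (ξ : ℕ → RR K) (i : ℕ) : RR K :=
  D (Dbar (ξ i)) - pderiv (Var.u 1) F * D (ξ i) - pderiv (Var.ubar 0) F * Dbar (ξ i)
    - pderiv (Var.u 0) F * ξ i

/-- B_i coefficient. -/
def Bcoef (F : RR K) (Dbar : Derivation K (RR K) (RR K)) (ξ : ℕ → RR K) (i : ℕ) : RR K :=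
  Dbar (ξ i) - pderiv (Var.u 1) F * ξ i

/-- T_i coefficient. -/
def Tcoef (F : RR K) (D Dbar : Derivation K (RR K) (RR K)) (ξ : ℕ → RR K) (k i : ℕ) : RR K :=
  (if i ≤ k then Acoef F D Dbar ξ i else 0) + (if i = 0 then 0 else Bcoef F Dbar ξ (i - 1))

theorem statement4'
    (F : RR K) (hF : F ∈ MvPolynomial.supported K Fvars)
    (D Dbar : Derivation K (RR K) (RR K)) (hDD : IsTotalDerPair F D Dbar)
    (k : ℕ) (ξ : ℕ → RR K) (hdrv : IsDriver F D Dbar k ξ) :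
    (Dbar (ξ k) - pderiv (Var.u 1) F * ξ k = 0) ∧
    (∀ i : ℕ, 1 ≤ i → i ≤ k →
      Dbar (ξ (i - 1)) - pderiv (Var.u 1) F * ξ (i - 1) =
        pderiv (Var.u 0) F * ξ i + pderiv (Var.u 1) F * D (ξ i)
          + pderiv (Var.ubar 0) F * Dbar (ξ i) - D (Dbar (ξ i))) := by
  obtain ⟨hξk, hsym⟩ := hdrv
  have hsplit : ∀ d : ℕ → RR K,
      ∑ i ∈ Finset.range (k + 2), Tcoef F D Dbar ξ k i * d i
        = ∑ i ∈ Finset.range (k + 1),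
            (Acoef F D Dbar ξ i * d i + Bcoef F Dbar ξ i * d (i + 1)) := by
    intro d
    simp only [Tcoef, add_mul, Finset.sum_add_distrib]
    congr 1
    · rw [Finset.sum_range_succ, if_neg (by omega : ¬ k + 1 ≤ k), zero_mul, add_zero]
      exact Finset.sum_congr rfl fun i hi => by
        rw [if_pos (Nat.lt_succ_iff.mp (Finset.mem_range.mp hi))]
    · rw [Finset.sum_range_succ']
      simp only [if_neg (Nat.succ_ne_zero _), Nat.add_sub_cancel, if_pos rfl, if_true, zero_mul, add_zero]
  have key : ∀ m : ℕ,
      ∑ i ∈ Finset.range (k + 2), Tcoef F D Dbar ξ k i * (⇑D)^[i] (X Var.x ^ m) = 0 := by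
    intro m
    set d : ℕ → RR K := fun i => (⇑D)^[i] (X Var.x ^ m) with hd
    have hdbar : ∀ i, Dbar (d i) = 0 := fun i => Dbar_iterD_xpow hDD i m
    have hDd : ∀ i, D (d i) = d (i + 1) := fun i => (Function.iterate_succ_apply' ⇑D i _).symm
    have hs := hsym _ (Dbar_xpow hDD m)
    unfold IsSymmetry opApply at hs
    have h1 : Dbar (∑ i ∈ Finset.range (k + 1), ξ i * d i)
        = ∑ i ∈ Finset.range (k + 1), Dbar (ξ i) * d i := by
      rw [map_sum]
      exact Finset.sum_congr rfl fun i _ => by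
        rw [Derivation.leibniz, hdbar, smul_zero, zero_add, smul_eq_mul, mul_comm]
    have h2 : D (∑ i ∈ Finset.range (k + 1), Dbar (ξ i) * d i)
        = ∑ i ∈ Finset.range (k + 1), (D (Dbar (ξ i)) * d i + Dbar (ξ i) * d (i + 1)) := by
      rw [map_sum]
      exact Finset.sum_congr rfl fun i _ => by
        rw [Derivation.leibniz, hDd, smul_eq_mul, smul_eq_mul, mul_comm (d i)]
        ring
    have h3 : D (∑ i ∈ Finset.range (k + 1), ξ i * d i)
        = ∑ i ∈ Finset.range (k + 1), (D (ξ i) * d i + ξ i * d (i + 1)) := by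
      rw [map_sum]
      exact Finset.sum_congr rfl fun i _ => by
        rw [Derivation.leibniz, hDd, smul_eq_mul, smul_eq_mul, mul_comm (d i)]
        ring
    rw [h1, h2, h3, Finset.mul_sum, Finset.mul_sum, Finset.mul_sum,
      ← Finset.sum_sub_distrib, ← Finset.sum_sub_distrib, ← Finset.sum_sub_distrib] at hs
    rw [hsplit d, ← hs]
    exact Finset.sum_congr rfl fun i _ => by
      simp only [Acoef, Bcoef]
      ring
  have hT : ∀ m, m ≤ k + 1 → Tcoef F D Dbar ξ k m = 0 := by
    intro m
    induction m using Nat.strong_induction_on with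
    | _ m ih =>
      intro hm
      have h := key m
      have hone : ∑ i ∈ Finset.range (k + 2), Tcoef F D Dbar ξ k i * (⇑D)^[i] (X Var.x ^ m)
          = Tcoef F D Dbar ξ k m * (m.factorial : RR K) := by
        rw [Finset.sum_eq_single_of_mem m (Finset.mem_range.2 (by omega))]
        · rw [iterD_xpow hDD, Nat.descFactorial_self, Nat.sub_self, pow_zero, mul_one]
        · intro i hi hne
          rcases lt_or_gt_of_ne hne with hlt | hgt
          · rw [ih i hlt (by omega), zero_mul]
          · rw [iterD_xpow hDD, Nat.descFactorial_eq_zero_iff_lt.2 hgt, Nat.cast_zero,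
              zero_mul, mul_zero]
      rw [hone] at h
      have hfac : ((m.factorial : ℕ) : RR K) ≠ 0 :=
        Nat.cast_ne_zero.mpr m.factorial_ne_zero
      exact (mul_eq_zero.1 h).resolve_right hfac
  constructor
  · have h := hT (k + 1) le_rfl
    simp only [Tcoef, if_neg (by omega : ¬ k + 1 ≤ k), if_neg (Nat.succ_ne_zero k),
      Nat.add_sub_cancel, zero_add, Bcoef] at h
    exact h
  · intro i h1i hik
    have h := hT i (by omega)
    simp only [Tcoef, if_pos hik, if_neg (by omega : ¬ i = 0), Acoef, Bcoef] at h
    linear_combination h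

/-- the coefficients of an x-symmetry driver satisfy
(D̄ − F_{u₁})(ξ_k) = 0 and, for 1 ≤ i ≤ k,
(D̄ − F_{u₁})(ξ_{i−1}) = (F_{u₀} + F_{u₁}·D + F_{ū₁}·D̄ − D∘D̄)(ξ_i). -/
theorem statement4
    (F : RR K) (hF : F ∈ MvPolynomial.supported K Fvars)
    (D Dbar : Derivation K (RR K) (RR K)) (hDD : IsTotalDerPair F D Dbar)
    (k : ℕ) (ξ : ℕ → RR K) (hdrv : IsDriver F D Dbar k ξ) :
    (Dbar (ξ k) - pderiv (Var.u 1) F * ξ k = 0) ∧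
    (∀ i : ℕ, 1 ≤ i → i ≤ k →
      Dbar (ξ (i - 1)) - pderiv (Var.u 1) F * ξ (i - 1) =
        pderiv (Var.u 0) F * ξ i + pderiv (Var.u 1) F * D (ξ i)
          + pderiv (Var.ubar 0) F * Dbar (ξ i) - D (Dbar (ξ i))) := by
  exact statement4' F hF D Dbar hDD k ξ hdrv
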